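/- For all ordinals α and β, α·β ≤ ⨁_{i<β} α ≤ α·2·β, where ⨁_{i<β} α is the β-fold iterated Hessenberg sum of α and · is ordinal multiplication. -/

import Mathlib

open Ordinal Order Set

namespace Ordinal

universe u

/-- Natural (Hessenberg) addition, as defined in Mathlib of December 2024. -/
noncomputable def nadd (a b : Ordinal.{u}) : Ordinal.{u} :=
  max (⨆ x : Set.Iio a, Order.succ (nadd x.1 b)) (⨆ x : Set.Iio b, Order.succ (nadd a x.1))
termination_by (a, b)
decreasing_by all_goals cases x; decreasing_tactic

end Ordinal

/-- The `β`-fold iterated Hessenberg (natural) sum of `α`: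
`⨁_{i<0} α = 0`, `⨁_{i<β+1} α = (⨁_{i<β} α) ⊕ α`, and
`⨁_{i<λ} α = sup_{β<λ} ⨁_{i<β} α` for `λ` a limit ordinal. -/
noncomputable def iterNadd (α β : Ordinal) : Ordinal :=
  Ordinal.limitRecOn β 0 (fun _ ih => Ordinal.nadd ih α)
    (fun b _ ih => ⨆ γ : Set.Iio b, ih γ.1 γ.2)

infixl:65 " ♯ " => Ordinal.nadd

namespace Ordinal

theorem nadd_unfold (a b : Ordinal) : a ♯ b =
    max (⨆ x : Set.Iio a, Order.succ (x.1 ♯ b)) (⨆ x : Set.Iio b, Order.succ (a ♯ x.1)) := by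
  rw [nadd]

theorem nadd_le_iff {a b c : Ordinal} :
    b ♯ c ≤ a ↔ (∀ b' < b, b' ♯ c < a) ∧ ∀ c' < c, b ♯ c' < a := by
  rw [nadd_unfold, max_le_iff, Ordinal.iSup_le_iff, Ordinal.iSup_le_iff]
  simp only [Order.succ_le_iff, Subtype.forall, Set.mem_Iio]

theorem lt_nadd_iff {a b c : Ordinal} :
    a < b ♯ c ↔ (∃ b' < b, a ≤ b' ♯ c) ∨ ∃ c' < c, a ≤ b ♯ c' := by
  rw [← not_le, nadd_le_iff]
  simp only [not_and_or, not_forall, not_lt, exists_prop]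

theorem nadd_lt_nadd_right {a b : Ordinal} (h : a < b) (c : Ordinal) : a ♯ c < b ♯ c :=
  lt_nadd_iff.2 (Or.inl ⟨a, h, le_rfl⟩)

theorem nadd_lt_nadd_left {a b : Ordinal} (h : a < b) (c : Ordinal) : c ♯ a < c ♯ b :=
  lt_nadd_iff.2 (Or.inr ⟨a, h, le_rfl⟩)

theorem nadd_le_nadd_right {a b : Ordinal} (h : a ≤ b) (c : Ordinal) : a ♯ c ≤ b ♯ c := by
  rcases h.lt_or_eq with h | rfl
  · exact (nadd_lt_nadd_right h c).le
  · exact le_rfl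

theorem nadd_le_nadd_left {a b : Ordinal} (h : a ≤ b) (c : Ordinal) : c ♯ a ≤ c ♯ b := by
  rcases h.lt_or_eq with h | rfl
  · exact (nadd_lt_nadd_left h c).le
  · exact le_rfl

theorem nadd_le_nadd {a b c d : Ordinal} (h₁ : a ≤ b) (h₂ : c ≤ d) : a ♯ c ≤ b ♯ d :=
  (nadd_le_nadd_right h₁ c).trans (nadd_le_nadd_left h₂ b)

theorem nadd_comm (a b : Ordinal) : a ♯ b = b ♯ a := by
  induction a using Ordinal.induction generalizing b with
  | h a IHa =>
  induction b using Ordinal.induction with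
  | h b IHb =>
  apply le_antisymm
  · rw [nadd_le_iff]
    refine ⟨fun a' ha' => ?_, fun b' hb' => ?_⟩
    · rw [IHa a' ha']; exact nadd_lt_nadd_left ha' b
    · rw [IHb b' hb']; exact nadd_lt_nadd_right hb' a
  · rw [nadd_le_iff]
    refine ⟨fun b' hb' => ?_, fun a' ha' => ?_⟩
    · rw [← IHb b' hb']; exact nadd_lt_nadd_left hb' a
    · rw [← IHa a' ha']; exact nadd_lt_nadd_right ha' b

@[simp]
theorem nadd_zero (a : Ordinal) : a ♯ 0 = a := by
  induction a using Ordinal.induction with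
  | h a IH =>
  apply le_antisymm
  · rw [nadd_le_iff]
    refine ⟨fun a' ha' => ?_, fun c hc => absurd hc (not_lt_of_ge (show (0 : Ordinal) ≤ c from zero_le))⟩
    rw [IH a' ha']; exact ha'
  · apply le_of_forall_lt
    intro c hc
    rw [← IH c hc]
    exact nadd_lt_nadd_right hc 0

@[simp]
theorem zero_nadd (a : Ordinal) : 0 ♯ a = a := by
  rw [nadd_comm, nadd_zero]

theorem succ_nadd (a b : Ordinal) : Order.succ a ♯ b = Order.succ (a ♯ b) := by
  induction b using Ordinal.induction with
  | h b IH =>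
  apply le_antisymm
  · rw [nadd_le_iff]
    refine ⟨fun a' ha' => ?_, fun b' hb' => ?_⟩
    · exact Order.lt_succ_iff.2 (nadd_le_nadd_right (Order.lt_succ_iff.1 ha') b)
    · rw [IH b' hb']
      exact Order.succ_lt_succ (nadd_lt_nadd_left hb' a)
  · exact Order.succ_le_of_lt (nadd_lt_nadd_right (Order.lt_succ a) b)

theorem nadd_succ (a b : Ordinal) : a ♯ Order.succ b = Order.succ (a ♯ b) := by
  rw [nadd_comm, succ_nadd, nadd_comm]

theorem add_le_nadd (a b : Ordinal) : a + b ≤ a ♯ b := by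
  induction b using Ordinal.induction with
  | h b IH =>
  apply le_of_forall_lt
  intro c hc
  rcases lt_or_ge c a with h | h
  · calc c < a := h
      _ = a ♯ 0 := (nadd_zero a).symm
      _ ≤ a ♯ b := nadd_le_nadd_left (show (0 : Ordinal) ≤ b from zero_le) a
  · have hd : a + (c - a) = c := Ordinal.add_sub_cancel_of_le h
    have hdb : c - a < b := by
      rw [← hd] at hc
      exact (add_lt_add_iff_left a).1 hc
    calc c = a + (c - a) := hd.symm
      _ ≤ a ♯ (c - a) := IH _ hdb
      _ < a ♯ b := nadd_lt_nadd_left hdb a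

theorem nadd_nat (a : Ordinal) (n : ℕ) : a ♯ (n : Ordinal) = a + n := by
  induction n with
  | zero => simp
  | succ n ih =>
    rw [Nat.cast_succ, Ordinal.add_one_eq_succ, nadd_succ, ih, add_succ]

end Ordinal


theorem natCast_succ_eq (k : ℕ) : Order.succ ((k : ℕ) : Ordinal) = ((k + 1 : ℕ) : Ordinal) := by
  rw [← Ordinal.add_one_eq_succ, Nat.cast_add, Nat.cast_one]

theorem ordinal_mul_two (z : Ordinal) : z * 2 = z + z := by
  rw [show (2 : Ordinal) = 1 + 1 from one_add_one_eq_two.symm, mul_add, mul_one]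

/-- `(a ♯ b) + c ≤ (a + c) ♯ b`. -/
theorem nadd_add_le (a b c : Ordinal) : (a ♯ b) + c ≤ (a + c) ♯ b := by
  induction c using Ordinal.limitRecOn with
  | zero => simp
  | add_one c IH =>
      rw [Ordinal.add_one_eq_succ, add_succ, add_succ, succ_nadd]
      exact succ_le_succ IH
  | limit c hc IH =>
      rw [(isNormal_add_right (a ♯ b)).le_iff_forall_le hc]
      intro c' hc'
      exact (IH c' hc').trans (nadd_le_nadd_right (add_le_add_right hc'.le a) b)

/-- `w * (q ♯ p) ≤ (w * q) ♯ (w * p)`. -/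
theorem mul_nadd_le (w q p : Ordinal) : w * (q ♯ p) ≤ w * q ♯ w * p := by
  rcases eq_or_ne w 0 with rfl | hw
  · simp
  have key : ∀ s q p : Ordinal, q ♯ p = s → w * (q ♯ p) ≤ w * q ♯ w * p := by
    intro s
    induction s using Ordinal.induction with
    | h s IH =>
    intro q p hs
    apply le_of_forall_lt
    intro z hz
    have hv : z / w < q ♯ p := (Ordinal.div_lt hw).2 hz
    have hz' : z < w * (z / w) + w := by
      conv_lhs => rw [← Ordinal.div_add_mod z w]
      exact add_lt_add_right (Ordinal.mod_lt z hw) _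
    rcases lt_nadd_iff.1 hv with ⟨q', hq', hv'⟩ | ⟨p', hp', hv'⟩
    · have h1 : z < w * (q' ♯ p) + w :=
        hz'.trans_le (add_le_add_left (mul_le_mul_right hv' w) w)
      have h2 : w * (q' ♯ p) + w ≤ (w * q' ♯ w * p) + w :=
        add_le_add_left (IH (q' ♯ p) (hs ▸ nadd_lt_nadd_right hq' p) q' p rfl) w
      have h3 : (w * q' ♯ w * p) + w ≤ (w * q' + w) ♯ w * p := nadd_add_le _ _ _
      have h4 : w * q' + w ≤ w * q := by
        rw [← mul_succ]
        exact mul_le_mul_right (succ_le_of_lt hq') w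
      exact h1.trans_le (h2.trans (h3.trans (nadd_le_nadd_right h4 _)))
    · have h1 : z < w * (q ♯ p') + w :=
        hz'.trans_le (add_le_add_left (mul_le_mul_right hv' w) w)
      have h2 : w * (q ♯ p') + w ≤ (w * q ♯ w * p') + w :=
        add_le_add_left (IH (q ♯ p') (hs ▸ nadd_lt_nadd_left hp' q) q p' rfl) w
      have h3 : (w * q ♯ w * p') + w ≤ w * q ♯ (w * p' + w) := by
        rw [nadd_comm (w * q), nadd_comm (w * q)]
        exact nadd_add_le _ _ _
      have h4 : w * p' + w ≤ w * p := by
        rw [← mul_succ]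
        exact mul_le_mul_right (succ_le_of_lt hp') w
      exact h1.trans_le (h2.trans (h3.trans (nadd_le_nadd_left h4 _)))
  exact key _ q p rfl

/-- The CNF-merge lemma for natural addition, assuming `ω ^ c` is closed under `♯`. -/
theorem nadd_merge {c : Ordinal}
    (H : ∀ a b, a < ω ^ c → b < ω ^ c → a ♯ b < ω ^ c) :
    ∀ q p a b : Ordinal, a < ω ^ c → b < ω ^ c →
      (ω ^ c * q + a) ♯ (ω ^ c * p + b) = ω ^ c * (q ♯ p) + (a ♯ b) := by
  set D := ω ^ c with hD
  have hD0 : D ≠ 0 := opow_ne_zero c omega0_ne_zero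
  have key : ∀ v q p a b : Ordinal, a < D → b < D →
      (D * q + a) ♯ (D * p + b) = v → v = D * (q ♯ p) + (a ♯ b) := by
    intro v
    induction v using Ordinal.induction with
    | h v IH =>
    intro q p a b ha hb hv
    -- one-sided bound, applied twice by symmetry
    have side : ∀ q p a b : Ordinal, a < D → b < D →
        (D * q + a) ♯ (D * p + b) = v →
        ∀ w < D * q + a, w ♯ (D * p + b) < D * (q ♯ p) + (a ♯ b) := by
      intro q p a b ha hb hv w hw
      have hwv : w ♯ (D * p + b) < v := hv ▸ nadd_lt_nadd_right hw _
      rcases lt_or_ge w (D * q) with h | h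
      · have hq1 : w / D < q := (Ordinal.div_lt hD0).2 h
        have hr : w % D < D := Ordinal.mod_lt w hD0
        have hw' : D * (w / D) + w % D = w := Ordinal.div_add_mod w D
        have heq := IH _ hwv (w / D) p (w % D) b hr hb (by rw [hw'])
        rw [heq]
        calc D * (w / D ♯ p) + (w % D ♯ b)
            < D * (w / D ♯ p) + D := add_lt_add_right (H _ _ hr hb) _
          _ = D * succ (w / D ♯ p) := (mul_succ _ _).symm
          _ = D * (succ (w / D) ♯ p) := by rw [succ_nadd]
          _ ≤ D * (q ♯ p) :=
              mul_le_mul_right (nadd_le_nadd_right (succ_le_of_lt hq1) p) D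
          _ ≤ D * (q ♯ p) + (a ♯ b) := le_self_add
      · have hw' : D * q + (w - D * q) = w := Ordinal.add_sub_cancel_of_le h
        have ha1 : w - D * q < a := by
          have := hw'.symm ▸ hw
          exact (add_lt_add_iff_left (D * q)).1 this
        have heq := IH _ hwv q p (w - D * q) b (ha1.trans ha) hb (by rw [hw'])
        rw [heq]
        exact add_lt_add_right (nadd_lt_nadd_right ha1 b) _
    have hle : v ≤ D * (q ♯ p) + (a ♯ b) := by
      rw [← hv]
      rw [nadd_le_iff]
      constructor
      · intro w hw
        exact side q p a b ha hb hv w hw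
      · intro w hw
        have := side p q b a hb ha (by rw [nadd_comm]; exact hv) w hw
        rwa [nadd_comm, nadd_comm b a, nadd_comm p q] at this
    have hge : D * (q ♯ p) + (a ♯ b) ≤ v := by
      apply le_of_forall_lt
      intro z hz
      rcases lt_or_ge z (D * (q ♯ p)) with h | h
      · have h1 : z < D * q ♯ D * p := h.trans_le (mul_nadd_le D q p)
        have h2 : D * q ♯ D * p ≤ v := by
          rw [← hv]
          exact nadd_le_nadd (le_self_add) (le_self_add)
        exact h1.trans_le h2
      · have hz' : D * (q ♯ p) + (z - D * (q ♯ p)) = z := Ordinal.add_sub_cancel_of_le h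
        have hu : z - D * (q ♯ p) < a ♯ b := by
          have := hz'.symm ▸ hz
          exact (add_lt_add_iff_left _).1 this
        rcases lt_nadd_iff.1 hu with ⟨a', ha', hu'⟩ | ⟨b', hb', hu'⟩
        · have hx' : D * q + a' < D * q + a := add_lt_add_right ha' _
          have hlt : (D * q + a') ♯ (D * p + b) < v := hv ▸ nadd_lt_nadd_right hx' _
          have heq := IH _ hlt q p a' b (ha'.trans ha) hb rfl
          calc z = D * (q ♯ p) + (z - D * (q ♯ p)) := hz'.symm
            _ ≤ D * (q ♯ p) + (a' ♯ b) := add_le_add_right hu' _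
            _ = (D * q + a') ♯ (D * p + b) := heq.symm
            _ < v := hlt
        · have hy' : D * p + b' < D * p + b := add_lt_add_right hb' _
          have hlt : (D * q + a) ♯ (D * p + b') < v := hv ▸ nadd_lt_nadd_left hy' _
          have heq := IH _ hlt q p a b' ha (hb'.trans hb) rfl
          calc z = D * (q ♯ p) + (z - D * (q ♯ p)) := hz'.symm
            _ ≤ D * (q ♯ p) + (a ♯ b') := add_le_add_right hu' _
            _ = (D * q + a) ♯ (D * p + b') := heq.symm
            _ < v := hlt
    exact le_antisymm hle hge
  intro q p a b ha hb
  exact key _ q p a b ha hb rfl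

/-- `ω ^ c` is closed under natural addition. -/
theorem nadd_principal : ∀ c a b : Ordinal, a < ω ^ c → b < ω ^ c → a ♯ b < ω ^ c := by
  intro c
  induction c using Ordinal.induction with
  | h c IH =>
  intro a b ha hb
  rcases Ordinal.zero_or_succ_or_isSuccLimit c with rfl | ⟨d, rfl⟩ | hc
  · rw [opow_zero] at ha hb ⊢
    rw [Ordinal.lt_one_iff_zero] at ha hb
    subst ha; subst hb; simpa using Ordinal.one_pos
  · -- successor case
    set D := ω ^ d with hDdef
    have hD0 : D ≠ 0 := opow_ne_zero d omega0_ne_zero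
    have hDω : ω ^ succ d = D * ω := opow_succ ω d
    rw [hDω] at ha hb ⊢
    have hqa : a / D < ω := (Ordinal.div_lt hD0).2 ha
    have hqb : b / D < ω := (Ordinal.div_lt hD0).2 hb
    obtain ⟨m, hm⟩ := Ordinal.lt_omega0.1 hqa
    obtain ⟨n, hn⟩ := Ordinal.lt_omega0.1 hqb
    have hra : a % D < D := Ordinal.mod_lt a hD0
    have hrb : b % D < D := Ordinal.mod_lt b hD0
    have hP : ∀ x y, x < ω ^ d → y < ω ^ d → x ♯ y < ω ^ d := IH d (lt_succ d)
    have hmerge := nadd_merge hP (a / D) (b / D) (a % D) (b % D) hra hrb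
    rw [Ordinal.div_add_mod, Ordinal.div_add_mod] at hmerge
    rw [hmerge, hm, hn]
    have hnat : (m : Ordinal) ♯ (n : Ordinal) = ((m + n : ℕ) : Ordinal) := by
      rw [nadd_nat]; push_cast; ring
    rw [hnat]
    calc D * ((m + n : ℕ) : Ordinal) + (a % D ♯ b % D)
        < D * ((m + n : ℕ) : Ordinal) + D := add_lt_add_right (hP _ _ hra hrb) _
      _ = D * succ ((m + n : ℕ) : Ordinal) := (mul_succ _ _).symm
      _ = D * ((m + n + 1 : ℕ) : Ordinal) := by
          rw [natCast_succ_eq]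
      _ ≤ D * ω := mul_le_mul_right (nat_lt_omega0 _).le D
  · -- limit case
    obtain ⟨da, hda, ha'⟩ := (isNormal_opow one_lt_omega0).lt_iff_exists_lt hc |>.1 ha
    obtain ⟨db, hdb, hb'⟩ := (isNormal_opow one_lt_omega0).lt_iff_exists_lt hc |>.1 hb
    have h1 : a < ω ^ max da db :=
      ha'.trans_le (opow_le_opow_right omega0_pos (le_max_left _ _))
    have h2 : b < ω ^ max da db :=
      hb'.trans_le (opow_le_opow_right omega0_pos (le_max_right _ _))
    exact (IH _ (max_lt hda hdb) a b h1 h2).trans_le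
      (opow_le_opow_right omega0_pos (max_lt hda hdb).le)

/-- Key inequality: `x ♯ y ≤ x + y * 2`. -/
theorem nadd_le_add_mul_two (x y : Ordinal) : x ♯ y ≤ x + y * 2 := by
  rcases eq_or_ne y 0 with rfl | hy
  · simp
  set e := Ordinal.log ω y with he
  have he1 : ω ^ e ≤ y := opow_log_le_self ω hy
  have he2 : y < ω ^ succ e := lt_opow_succ_log_self one_lt_omega0 y
  set D := ω ^ succ e with hDdef
  have hD0 : D ≠ 0 := opow_ne_zero _ omega0_ne_zero
  have hPD : ∀ a b, a < D → b < D → a ♯ b < D := nadd_principal (succ e)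
  have hrx : x % D < D := Ordinal.mod_lt x hD0
  have hsplit : x ♯ y = D * (x / D) + (x % D ♯ y) := by
    have := nadd_merge hPD (x / D) 0 (x % D) y hrx he2
    rw [Ordinal.div_add_mod, mul_zero, zero_add, nadd_zero] at this
    exact this
  have hgoal : x % D ♯ y ≤ x % D + y * 2 := by
    -- now both `x % D` and `y` are below `ω ^ (e+1)`; split at `ω ^ e`
    set E := ω ^ e with hEdef
    have hE0 : E ≠ 0 := opow_ne_zero _ omega0_ne_zero
    have hDE : D = E * ω := opow_succ ω e
    set r := x % D with hr
    have hrE : r < E * ω := by rw [← hDE]; exact hrx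
    have hyE : y < E * ω := by rw [← hDE]; exact he2
    have hm : r / E < ω := (Ordinal.div_lt hE0).2 hrE
    have hn : y / E < ω := (Ordinal.div_lt hE0).2 hyE
    obtain ⟨m, hm'⟩ := Ordinal.lt_omega0.1 hm
    obtain ⟨n, hn'⟩ := Ordinal.lt_omega0.1 hn
    have hn1 : (1 : Ordinal) ≤ y / E := (Ordinal.le_div hE0).2 (by rw [mul_one]; exact he1)
    have hn1' : 1 ≤ n := by
      rw [hn'] at hn1
      exact_mod_cast hn1
    have ha : r % E < E := Ordinal.mod_lt r hE0
    have hb : y % E < E := Ordinal.mod_lt y hE0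
    have hPE : ∀ a b, a < E → b < E → a ♯ b < E := nadd_principal e
    have hmerge := nadd_merge hPE (r / E) (y / E) (r % E) (y % E) ha hb
    rw [Ordinal.div_add_mod, Ordinal.div_add_mod] at hmerge
    -- compute the right-hand side
    have hbn : y % E + E * (y / E) = E * (y / E) := by
      apply Ordinal.add_absorp hb
      calc E = E * 1 := (mul_one E).symm
        _ ≤ E * (y / E) := mul_le_mul_right hn1 E
    have hE_le : E ≤ E * (y / E) := by
      calc E = E * 1 := (mul_one E).symm
        _ ≤ E * (y / E) := mul_le_mul_right hn1 E
    have hy2 : y * 2 = E * (y / E) + (E * (y / E) + y % E) := by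
      rw [ordinal_mul_two]
      conv_lhs => rw [← Ordinal.div_add_mod y E]
      rw [add_assoc]
      congr 1
      exact Ordinal.add_absorp hb (hE_le.trans (le_self_add))
    have han : r % E + (E * (y / E) + (E * (y / E) + y % E)) =
        E * (y / E) + (E * (y / E) + y % E) := by
      apply Ordinal.add_absorp ha
      calc E = E * 1 := (mul_one E).symm
        _ ≤ E * (y / E) := mul_le_mul_right hn1 E
        _ ≤ E * (y / E) + (E * (y / E) + y % E) := le_self_add
    have hrhs : r + y * 2 = E * (r / E) + (E * (y / E) + (E * (y / E) + y % E)) := by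
      conv_lhs => rw [← Ordinal.div_add_mod r E]
      rw [hy2, add_assoc, han]
    -- compare
    rw [hmerge, hrhs, hm', hn']
    have hnatsum : (m : Ordinal) ♯ (n : Ordinal) = ((m + n : ℕ) : Ordinal) := by
      rw [nadd_nat]; push_cast; ring
    rw [hnatsum]
    have hlt : E * ((m + n : ℕ) : Ordinal) + (r % E ♯ y % E)
        < E * ((m + n + 1 : ℕ) : Ordinal) := by
      calc E * ((m + n : ℕ) : Ordinal) + (r % E ♯ y % E)
          < E * ((m + n : ℕ) : Ordinal) + E := add_lt_add_right (hPE _ _ ha hb) _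
        _ = E * succ ((m + n : ℕ) : Ordinal) := (mul_succ _ _).symm
        _ = E * ((m + n + 1 : ℕ) : Ordinal) := by
            rw [natCast_succ_eq]
    have hle2 : E * ((m + n + 1 : ℕ) : Ordinal) ≤
        E * ((m : Ordinal)) + (E * ((n : Ordinal)) + (E * ((n : Ordinal)) + y % E)) := by
      have : E * ((m : Ordinal)) + (E * ((n : Ordinal)) + (E * ((n : Ordinal)) + y % E)) =
          E * ((m + n + n : ℕ) : Ordinal) + y % E := by
        push_cast
        rw [mul_add, mul_add]
        simp [add_assoc]
      rw [this]
      refine le_trans (mul_le_mul_right ?_ E) (le_self_add)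
      exact_mod_cast Nat.add_le_add (le_refl (m + n)) hn1'
    exact (hlt.trans_le hle2).le
  calc x ♯ y = D * (x / D) + (x % D ♯ y) := hsplit
    _ ≤ D * (x / D) + (x % D + y * 2) := add_le_add_right hgoal _
    _ = (D * (x / D) + x % D) + y * 2 := (add_assoc _ _ _).symm
    _ = x + y * 2 := by rw [Ordinal.div_add_mod]

theorem iterNadd_zero (α : Ordinal) : iterNadd α 0 = 0 := by
  rw [iterNadd, Ordinal.limitRecOn_zero]

theorem iterNadd_succ (α β : Ordinal) : iterNadd α (succ β) = iterNadd α β ♯ α := by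
  rw [iterNadd, Ordinal.limitRecOn_succ]
  rfl

theorem iterNadd_limit (α β : Ordinal) (h : Order.IsSuccLimit β) :
    iterNadd α β = ⨆ γ : Set.Iio β, iterNadd α γ.1 := by
  rw [iterNadd, Ordinal.limitRecOn_limit _ _ _ _ h]
  rfl

/-- For all ordinals `α` and `β`, `α·β ≤ ⨁_{i<β} α ≤ α·2·β`. -/
theorem mul_le_iterNadd_le_mul_two_mul (α β : Ordinal) :
    α * β ≤ iterNadd α β ∧ iterNadd α β ≤ α * 2 * β := by
  induction β using Ordinal.limitRecOn with
  | zero => simp [iterNadd_zero]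
  | add_one β IH =>
      rw [Ordinal.add_one_eq_succ, iterNadd_succ]
      constructor
      · calc α * succ β = α * β + α := mul_succ α β
          _ ≤ iterNadd α β + α := add_le_add_left IH.1 α
          _ ≤ iterNadd α β ♯ α := add_le_nadd _ _
      · calc iterNadd α β ♯ α ≤ (α * 2 * β) ♯ α := nadd_le_nadd_right IH.2 α
          _ ≤ α * 2 * β + α * 2 := nadd_le_add_mul_two _ _
          _ = α * 2 * succ β := (mul_succ _ _).symm
  | limit β hβ IH =>
      rw [iterNadd_limit α β hβ]
      have hbdd : BddAbove (Set.range fun γ : Set.Iio β => iterNadd α γ.1) :=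
        Ordinal.bddAbove_of_small
      constructor
      · rcases eq_or_ne α 0 with rfl | hα
        · simp
        rw [(isNormal_mul_right (pos_iff_ne_zero.2 hα)).le_iff_forall_le hβ]
        intro γ hγ
        calc α * γ ≤ iterNadd α γ := (IH γ hγ).1
          _ ≤ ⨆ γ : Set.Iio β, iterNadd α γ.1 := le_ciSup hbdd ⟨γ, hγ⟩
      · apply ciSup_le'
        intro ⟨γ, hγ⟩
        calc iterNadd α γ ≤ α * 2 * γ := (IH γ hγ).2
          _ ≤ α * 2 * β := mul_le_mul_right hγ.le _
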